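/- For a path-connected space X and an open set U ⊆ X^n, the fibration e_n : X^{J_n} → X^n admits a continuous section over U if and only if there exists a map g : U → X such that each composition pr_i ∘ ι : U ↪ X^n → X (ι the inclusion, pr_i the i-th projection) is homotopic to g. -/

import Mathlib

open Set

/-- The `n`-th homotopic distance of maps `f 0, …, f (n-1) : X → Y`:
the least `k` admitting an open cover `U 0, …, U k` of `X` on each element of
which all the maps are pairwise homotopic; `∞` if no such cover exists. -/
noncomputable def homDist {X Y : Type*} [TopologicalSpace X] [TopologicalSpace Y]
    {n : ℕ} (f : Fin n → C(X, Y)) : ℕ∞ :=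
  sInf ((fun k : ℕ => (k : ℕ∞)) '' {k | ∃ U : Fin (k + 1) → Set X,
    (∀ j, IsOpen (U j)) ∧ (⋃ j, U j) = Set.univ ∧
    ∀ j i i', ((f i).restrict (U j)).Homotopic ((f i').restrict (U j))})

/-- Projection of `X^n` onto the `i`-th factor. -/
def prMap (X : Type*) [TopologicalSpace X] (n : ℕ) (i : Fin n) :
    C((Fin n → X), X) :=
  ⟨fun x => x i, continuous_apply i⟩

/-- The space `X^{J_n}` of `n`-legged paths in `X`: `n` paths with a common
initial point (the wedge of `n` intervals glued at `0`, mapped into `X`). -/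
abbrev NLegged (X : Type*) [TopologicalSpace X] (n : ℕ) : Type _ :=
  {γ : Fin n → C(unitInterval, X) // ∀ i j : Fin n, γ i 0 = γ j 0}

/-- The fibration `e_n : X^{J_n} → X^n` evaluating at the `n` free endpoints. -/
def enMap (X : Type*) [TopologicalSpace X] (n : ℕ) :
    C(NLegged X n, Fin n → X) :=
  ⟨fun γ i => (γ.1 i) 1, by
    apply continuous_pi; intro i
    exact (continuous_eval_const (1 : unitInterval)).comp
      ((continuous_apply i).comp continuous_subtype_val)⟩


/-- The fibration `e_n : X^{J_n} → X^n` admits a continuous section over an open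
set `U ⊆ X^n` iff there is a map `g : U → X` such that each composition
`prᵢ ∘ ι : U → X` is homotopic to `g`. -/
theorem section_iff_homotopic_to_common_map {X : Type*} [TopologicalSpace X]
    [PathConnectedSpace X] (n : ℕ) (U : Set (Fin n → X)) (hU : IsOpen U) :
    (∃ s : C(U, NLegged X n), ∀ x : U, enMap X n (s x) = (x : Fin n → X)) ↔
      ∃ g : C(U, X), ∀ i : Fin n,
        ((prMap X n i).restrict U).Homotopic g := by
  constructor
  · rintro ⟨s, hs⟩
    rcases Nat.eq_zero_or_pos n with hn | hn
    · subst hn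
      have : Nonempty X := PathConnectedSpace.nonempty
      exact ⟨ContinuousMap.const _ (Classical.arbitrary X), fun i => i.elim0⟩
    · set i0 : Fin n := ⟨0, hn⟩
      refine ⟨⟨fun x => (s x).1 i0 0, ?_⟩, ?_⟩
      · exact (continuous_eval_const 0).comp
          (((continuous_apply i0).comp continuous_subtype_val).comp s.continuous)
      · intro i
        refine ⟨⟨⟨fun p => (s p.2).1 i (unitInterval.symm p.1), ?_⟩, ?_, ?_⟩⟩
        · exact continuous_eval.comp
            ((((continuous_apply i).comp
              (continuous_subtype_val.comp (s.continuous.comp continuous_snd))).prodMk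
              (unitInterval.continuous_symm.comp continuous_fst)))
        · intro x
          simp only [unitInterval.symm_zero]
          have := congrFun (hs x) i
          simpa [enMap, prMap, ContinuousMap.restrict] using this
        · intro x
          simp only [unitInterval.symm_one]
          exact (s x).2 i i0
  · rintro ⟨g, h⟩
    set H : ∀ i : Fin n, ((prMap X n i).restrict U).Homotopy g :=
      fun i => (h i).some with hH
    refine ⟨⟨fun x => ⟨fun i => ⟨fun t => H i (unitInterval.symm t, x), ?_⟩,
      fun i j => ?_⟩, ?_⟩, ?_⟩
    · exact (H i).continuous.comp
        ((unitInterval.continuous_symm.prodMk continuous_const))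
    · simp only [ContinuousMap.coe_mk, unitInterval.symm_zero]
      rw [(H i).apply_one, (H j).apply_one]
    · refine Continuous.subtype_mk (continuous_pi fun i => ?_) _
      refine ContinuousMap.continuous_of_continuous_uncurry _ ?_
      exact (H i).continuous.comp
        ((unitInterval.continuous_symm.comp continuous_snd).prodMk continuous_fst)
    · intro x
      funext i
      show H i (unitInterval.symm 1, x) = _
      rw [unitInterval.symm_one, (H i).apply_zero]
      rfl
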